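/- arXiv:1309.0791 — 2 statements merged into one kernel-verified Lean document; each statement's English description precedes it below -/
import Mathlib

section
/- Let a, b, a', b' ∈ ℂ satisfy a² + 3b² = a'² + 3b'² and (b − b')(b + b')(2b − a' − b')(2b − a' + b')(2b + a' − b')(2b + a' + b') = 0. Then (a', b') lies in the orbit of (a, b) under the group of order 12 generated by the transformations s: (a,b) ↦ ((a+3b)/2, (a−b)/2) and t: (a,b) ↦ (a, −b). -/
noncomputable section

/-- The linear map `s : (a,b) ↦ ((a+3b)/2, (a−b)/2)` on `ℂ²`. -/
def sMap : (ℂ × ℂ) →ₗ[ℂ] (ℂ × ℂ) where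
  toFun p := ((p.1 + 3 * p.2) / 2, (p.1 - p.2) / 2)
  map_add' p q := by
    simp only [Prod.fst_add, Prod.snd_add, Prod.mk_add_mk, Prod.mk.injEq]
    constructor <;> ring
  map_smul' c p := by
    simp only [Prod.smul_fst, Prod.smul_snd, smul_eq_mul, Prod.smul_mk, RingHom.id_apply,
      Prod.mk.injEq]
    constructor <;> ring

lemma sMap_involutive : Function.Involutive sMap := by
  intro p
  simp only [sMap, LinearMap.coe_mk, AddHom.coe_mk]
  rw [Prod.ext_iff]
  constructor <;> · simp; ring

/-- The linear map `t : (a,b) ↦ (a, −b)` on `ℂ²`. -/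
def tMap : (ℂ × ℂ) →ₗ[ℂ] (ℂ × ℂ) where
  toFun p := (p.1, -p.2)
  map_add' p q := by
    simp only [Prod.fst_add, Prod.snd_add, Prod.mk_add_mk, Prod.mk.injEq]
    try constructor
    all_goals (try ring_nf)
    all_goals (try simp)
  map_smul' c p := by
    simp only [Prod.smul_fst, Prod.smul_snd, smul_eq_mul, Prod.smul_mk, RingHom.id_apply,
      Prod.mk.injEq]
    try constructor
    all_goals (try ring_nf)
    all_goals (try simp)

lemma tMap_involutive : Function.Involutive tMap := by
  intro p
  simp [tMap]

/-- `s` as a linear automorphism of `ℂ²`. -/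
def sEquiv : (ℂ × ℂ) ≃ₗ[ℂ] (ℂ × ℂ) := LinearEquiv.ofInvolutive sMap sMap_involutive

/-- `t` as a linear automorphism of `ℂ²`. -/
def tEquiv : (ℂ × ℂ) ≃ₗ[ℂ] (ℂ × ℂ) := LinearEquiv.ofInvolutive tMap tMap_involutive

lemma sEquiv_apply (p : ℂ × ℂ) : sEquiv p = ((p.1 + 3 * p.2) / 2, (p.1 - p.2) / 2) := rfl

lemma tEquiv_apply (p : ℂ × ℂ) : tEquiv p = (p.1, -p.2) := rfl

lemma mul_apply' (e f : (ℂ × ℂ) ≃ₗ[ℂ] (ℂ × ℂ)) (p : ℂ × ℂ) : (e * f) p = e (f p) := rfl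

/-- the relations forcing equal invariants for family 6 imply that
`(a', b')` is in the orbit of `(a, b)` under the group (of order 12) generated by
`s : (a,b) ↦ ((a+3b)/2, (a−b)/2)` and `t : (a,b) ↦ (a, −b)`. -/
theorem stmt_6 (a b a' b' : ℂ)
    (h1 : a ^ 2 + 3 * b ^ 2 = a' ^ 2 + 3 * b' ^ 2)
    (h2 : (b - b') * (b + b') * (2 * b - a' - b') * (2 * b - a' + b') *
      (2 * b + a' - b') * (2 * b + a' + b') = 0) :
    ∃ g ∈ Subgroup.closure ({sEquiv, tEquiv} : Set ((ℂ × ℂ) ≃ₗ[ℂ] (ℂ × ℂ))),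
      g (a, b) = (a', b') := by
  have hs : sEquiv ∈ Subgroup.closure ({sEquiv, tEquiv} : Set ((ℂ × ℂ) ≃ₗ[ℂ] (ℂ × ℂ))) :=
    Subgroup.subset_closure (Set.mem_insert _ _)
  have ht : tEquiv ∈ Subgroup.closure ({sEquiv, tEquiv} : Set ((ℂ × ℂ) ≃ₗ[ℂ] (ℂ × ℂ))) :=
    Subgroup.subset_closure (Set.mem_insert_iff.mpr (Or.inr rfl))
  rcases mul_eq_zero.mp h2 with h2 | h6
  rcases mul_eq_zero.mp h2 with h2 | h5
  rcases mul_eq_zero.mp h2 with h2 | h4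
  rcases mul_eq_zero.mp h2 with h2 | h3
  rcases mul_eq_zero.mp h2 with h | h
  · -- b = b'
    have hb : b' = b := by linear_combination -h
    have hq : (a' - a) * (a' + a) = 0 := by linear_combination -h1 + 3 * (b + b') * h
    rcases mul_eq_zero.mp hq with ha | ha
    · have ha' : a' = a := by linear_combination ha
      exact ⟨1, one_mem _, by rw [ha', hb]; rfl⟩
    · have ha' : a' = -a := by linear_combination ha
      refine ⟨sEquiv * tEquiv * sEquiv * tEquiv * sEquiv,
        mul_mem (mul_mem (mul_mem (mul_mem hs ht) hs) ht) hs, ?_⟩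
      rw [ha', hb]
      simp only [mul_apply', sEquiv_apply, tEquiv_apply, Prod.mk.injEq]
      constructor <;> ring
  · -- b = -b'
    have hb : b' = -b := by linear_combination h
    have hq : (a' - a) * (a' + a) = 0 := by linear_combination -h1 + 3 * (b - b') * h
    rcases mul_eq_zero.mp hq with ha | ha
    · have ha' : a' = a := by linear_combination ha
      refine ⟨tEquiv, ht, ?_⟩
      rw [ha', hb]
      simp only [tEquiv_apply]
    · have ha' : a' = -a := by linear_combination ha
      refine ⟨sEquiv * tEquiv * sEquiv * tEquiv * sEquiv * tEquiv,
        mul_mem (mul_mem (mul_mem (mul_mem (mul_mem hs ht) hs) ht) hs) ht, ?_⟩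
      rw [ha', hb]
      simp only [mul_apply', sEquiv_apply, tEquiv_apply, Prod.mk.injEq]
      constructor <;> ring
  · -- 2b - a' - b' = 0
    have ha'v : a' = 2 * b - b' := by linear_combination -h3
    have hq : (a - (2 * b' - b)) * (a + (2 * b' - b)) = 0 := by
      linear_combination h1 - (a' + 2 * b - b') * h3
    rcases mul_eq_zero.mp hq with ha | ha
    · have hb : b' = (a + b) / 2 := by linear_combination -ha / 2
      refine ⟨sEquiv * tEquiv * sEquiv, mul_mem (mul_mem hs ht) hs, ?_⟩
      rw [ha'v, hb]
      simp only [mul_apply', sEquiv_apply, tEquiv_apply, Prod.mk.injEq]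
      constructor <;> ring
    · have hb : b' = (b - a) / 2 := by linear_combination ha / 2
      refine ⟨tEquiv * sEquiv, mul_mem ht hs, ?_⟩
      rw [ha'v, hb]
      simp only [mul_apply', sEquiv_apply, tEquiv_apply, Prod.mk.injEq]
      constructor <;> ring
  · -- 2b - a' + b' = 0
    have ha'v : a' = 2 * b + b' := by linear_combination -h4
    have hq : (a - (b + 2 * b')) * (a + (b + 2 * b')) = 0 := by
      linear_combination h1 - (a' + 2 * b + b') * h4
    rcases mul_eq_zero.mp hq with ha | ha
    · have hb : b' = (a - b) / 2 := by linear_combination -ha / 2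
      refine ⟨sEquiv, hs, ?_⟩
      rw [ha'v, hb]
      simp only [sEquiv_apply, Prod.mk.injEq]
      exact ⟨by ring, trivial⟩
    · have hb : b' = -(a + b) / 2 := by linear_combination ha / 2
      refine ⟨tEquiv * sEquiv * tEquiv * sEquiv,
        mul_mem (mul_mem (mul_mem ht hs) ht) hs, ?_⟩
      rw [ha'v, hb]
      simp only [mul_apply', sEquiv_apply, tEquiv_apply, Prod.mk.injEq]
      constructor <;> ring
  · -- 2b + a' - b' = 0
    have ha'v : a' = b' - 2 * b := by linear_combination h5
    have hq : (a - (2 * b' - b)) * (a + (2 * b' - b)) = 0 := by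
      linear_combination h1 + (a' - 2 * b + b') * h5
    rcases mul_eq_zero.mp hq with ha | ha
    · have hb : b' = (a + b) / 2 := by linear_combination -ha / 2
      refine ⟨sEquiv * tEquiv, mul_mem hs ht, ?_⟩
      rw [ha'v, hb]
      simp only [mul_apply', sEquiv_apply, tEquiv_apply, Prod.mk.injEq]
      constructor <;> ring
    · have hb : b' = (b - a) / 2 := by linear_combination ha / 2
      refine ⟨tEquiv * sEquiv * tEquiv * sEquiv * tEquiv,
        mul_mem (mul_mem (mul_mem (mul_mem ht hs) ht) hs) ht, ?_⟩
      rw [ha'v, hb]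
      simp only [mul_apply', sEquiv_apply, tEquiv_apply, Prod.mk.injEq]
      constructor <;> ring
  · -- 2b + a' + b' = 0
    have ha'v : a' = -(2 * b) - b' := by linear_combination h6
    have hq : (a - (b + 2 * b')) * (a + (b + 2 * b')) = 0 := by
      linear_combination h1 + (a' - 2 * b - b') * h6
    rcases mul_eq_zero.mp hq with ha | ha
    · have hb : b' = (a - b) / 2 := by linear_combination -ha / 2
      refine ⟨sEquiv * tEquiv * sEquiv * tEquiv,
        mul_mem (mul_mem (mul_mem hs ht) hs) ht, ?_⟩
      rw [ha'v, hb]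
      simp only [mul_apply', sEquiv_apply, tEquiv_apply, Prod.mk.injEq]
      constructor <;> ring
    · have hb : b' = -(a + b) / 2 := by linear_combination ha / 2
      refine ⟨tEquiv * sEquiv * tEquiv, mul_mem (mul_mem ht hs) ht, ?_⟩
      rw [ha'v, hb]
      simp only [mul_apply', sEquiv_apply, tEquiv_apply, Prod.mk.injEq]
      constructor <;> ring
end
end

section
/- Let X be an invertible 8×8 complex matrix and for 1 ≤ i < j ≤ 8 set D_{ij} = x_{1i}x_{2j} − x_{1j}x_{2i} (the 2×2 minor formed from the first two rows and columns i, j). Suppose D_{ij} = 0 for all i < j except possibly (i,j) ∈ {(1,2),(3,4),(5,6),(7,8)}. Then there exists exactly one index l ∈ {1,2,3,4} such that the 2×2 block X_{1l} (rows 1,2 and columns 2l−1, 2l) is invertible, and for all other l' ≠ l the block X_{1l'} (rows 1,2 and columns 2l'−1, 2l') is the zero matrix. -/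
/-- The `2×2` block `X_{kl}` of an `8×8` matrix: rows `2k−1, 2k` and columns
`2l−1, 2l` (in 1-indexed terms), i.e. rows `2k, 2k+1` and columns `2l, 2l+1`
with 0-indexing. -/
def blk (X : Matrix (Fin 8) (Fin 8) ℂ) (k l : Fin 4) : Matrix (Fin 2) (Fin 2) ℂ :=
  fun r c => X ⟨2 * k + r, by omega⟩ ⟨2 * l + c, by omega⟩

private def idx (l : Fin 4) (c : Fin 2) : Fin 8 := ⟨2 * l + c, by omega⟩

private lemma blk_apply (X : Matrix (Fin 8) (Fin 8) ℂ) (l : Fin 4) (r c : Fin 2) :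
    blk X 0 l r c = X (idx 0 r) (idx l c) := rfl

private lemma idx00 : idx 0 0 = (0 : Fin 8) := by decide
private lemma idx01 : idx 0 1 = (1 : Fin 8) := by decide

/-- if `X` is invertible and all `2×2` minors `D_{ij}` from the first two
rows vanish except possibly `D_{12}, D_{34}, D_{56}, D_{78}`, then exactly one of the
blocks `X_{1l}` is invertible and all the other blocks `X_{1l'}` are zero. -/
theorem stmt_16 (X : Matrix (Fin 8) (Fin 8) ℂ) (hX : IsUnit X)
    (hD : ∀ i j : Fin 8, i < j → ¬((j : ℕ) = (i : ℕ) + 1 ∧ (i : ℕ) % 2 = 0) →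
      X 0 i * X 1 j - X 0 j * X 1 i = 0) :
    ∃ l : Fin 4, IsUnit (blk X 0 l) ∧ (∀ l' : Fin 4, l' ≠ l → blk X 0 l' = 0) ∧
      (∀ l' : Fin 4, IsUnit (blk X 0 l') → l' = l) := by
  have hdetX : X.det ≠ 0 := by
    have := (Matrix.isUnit_iff_isUnit_det X).mp hX
    exact isUnit_iff_ne_zero.mp this
  -- minors vanish for cross-block pairs (any order)
  have cross : ∀ i j : Fin 8, (i : ℕ) / 2 ≠ (j : ℕ) / 2 →
      X 0 i * X 1 j - X 0 j * X 1 i = 0 := by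
    intro i j hij
    rcases lt_trichotomy i j with h | h | h
    · have h' : (i : ℕ) < j := h
      exact hD i j h (by rintro ⟨h1, h2⟩; omega)
    · exact absurd (by rw [h]) hij
    · have h' : (j : ℕ) < i := h
      have := hD j i h (by rintro ⟨h1, h2⟩; omega)
      linear_combination -this
  -- the diagonal 2×2 minor of block l
  set D : Fin 4 → ℂ := fun l => X 0 (idx l 0) * X 1 (idx l 1) - X 0 (idx l 1) * X 1 (idx l 0)
    with hDdef
  have hdet : ∀ l : Fin 4, IsUnit (blk X 0 l) ↔ D l ≠ 0 := by
    intro l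
    rw [Matrix.isUnit_iff_isUnit_det, Matrix.det_fin_two, isUnit_iff_ne_zero]
    simp only [blk_apply, idx00, idx01, hDdef]
  -- some diagonal minor is nonzero
  have hex : ∃ l : Fin 4, D l ≠ 0 := by
    by_contra hc
    push_neg at hc
    have full : ∀ i j : Fin 8, X 0 i * X 1 j - X 0 j * X 1 i = 0 := by
      intro i j
      by_cases hij : (i : ℕ) / 2 = (j : ℕ) / 2
      · rcases lt_trichotomy i j with h | h | h
        · have h' : (i : ℕ) < j := h
          have hl : (i : ℕ) = 2 * ((i : ℕ) / 2) := by omega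
          have hj : (j : ℕ) = 2 * ((i : ℕ) / 2) + 1 := by omega
          have := hc ⟨(i : ℕ) / 2, by omega⟩
          have hi' : idx ⟨(i : ℕ) / 2, by omega⟩ 0 = i := by
            apply Fin.ext; simp [idx]; omega
          have hj' : idx ⟨(i : ℕ) / 2, by omega⟩ 1 = j := by
            apply Fin.ext; simp [idx]; omega
          simp only [hDdef] at this
          rw [hi', hj'] at this
          exact this
        · rw [h]; ring
        · have h' : (j : ℕ) < i := h
          have hl : (j : ℕ) = 2 * ((i : ℕ) / 2) := by omega
          have hi2 : (i : ℕ) = 2 * ((i : ℕ) / 2) + 1 := by omega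
          have := hc ⟨(i : ℕ) / 2, by omega⟩
          have hi' : idx ⟨(i : ℕ) / 2, by omega⟩ 0 = j := by
            apply Fin.ext; simp [idx]; omega
          have hj' : idx ⟨(i : ℕ) / 2, by omega⟩ 1 = i := by
            apply Fin.ext; simp [idx]; omega
          simp only [hDdef] at this
          rw [hi', hj'] at this
          linear_combination -this
      · exact cross i j hij
    -- build a nonzero left kernel vector
    have hker : ∃ v : Fin 8 → ℂ, v ≠ 0 ∧ Matrix.vecMul v X = 0 := by
      by_cases h0 : ∃ i : Fin 8, X 0 i ≠ 0
      · obtain ⟨i, hi⟩ := h0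
        refine ⟨fun k => if k = 0 then X 1 i else if k = 1 then -(X 0 i) else 0, ?_, ?_⟩
        · intro hv
          have := congrFun hv 1
          simp at this
          exact hi this
        · funext j
          have := full i j
          simp [Matrix.vecMul, dotProduct, Fin.sum_univ_eight]
          linear_combination -this
      · push_neg at h0
        refine ⟨fun k => if k = 0 then 1 else 0, ?_, ?_⟩
        · intro hv
          have := congrFun hv 0
          simp at this
        · funext j
          simp [Matrix.vecMul, dotProduct, Fin.sum_univ_eight, h0 j]
    exact hdetX (Matrix.exists_vecMul_eq_zero_iff.mp hker)
  obtain ⟨l, hl⟩ := hex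
  have hzero : ∀ l' : Fin 4, l' ≠ l → blk X 0 l' = 0 := by
    intro l' hne
    have hlv : (l' : ℕ) ≠ (l : ℕ) := fun h => hne (Fin.ext h)
    funext r c
    set a := idx l 0 with ha
    set b := idx l 1 with hb
    set j := idx l' c with hj
    have hav : (a : ℕ) = 2 * l := rfl
    have hbv : (b : ℕ) = 2 * (l : ℕ) + 1 := rfl
    have hjv : (j : ℕ) = 2 * (l' : ℕ) + c := rfl
    have hc2 : (c : ℕ) < 2 := c.isLt
    have h1 : X 0 a * X 1 j - X 0 j * X 1 a = 0 := cross a j (by omega)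
    have h2 : X 0 b * X 1 j - X 0 j * X 1 b = 0 := cross b j (by omega)
    have hj0 : X 0 j = 0 := by
      have hD0 : (X 0 a * X 1 b - X 0 b * X 1 a) * X 0 j = 0 := by
        linear_combination X 0 b * h1 - X 0 a * h2
      rcases mul_eq_zero.mp hD0 with h | h
      · exact absurd h hl
      · exact h
    have hj1 : X 1 j = 0 := by
      have hD1 : (X 0 a * X 1 b - X 0 b * X 1 a) * X 1 j = 0 := by
        linear_combination X 1 b * h1 - X 1 a * h2
      rcases mul_eq_zero.mp hD1 with h | h
      · exact absurd h hl
      · exact h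
    rw [blk_apply]
    fin_cases r
    · show X 0 (idx l' c) = 0; exact hj0
    · show X 1 (idx l' c) = 0; exact hj1
  refine ⟨l, (hdet l).mpr hl, hzero, ?_⟩
  intro l' hu
  by_contra hne
  rw [hzero l' hne] at hu
  have : ¬ IsUnit (0 : Matrix (Fin 2) (Fin 2) ℂ) := by
    simp [Matrix.isUnit_iff_isUnit_det]
  exact this hu
end
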